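/- Given a layered permutation τ ∈ S_k with k ≥ 2, there is a unique involution σ ∈ S_{k+2} whose length-k initial pattern equals τ and whose length-(k+1) initial pattern is not an involution. -/

import Mathlib

open Equiv Finset

/-- The number of involutions in the symmetric group S_n. -/
def numInvolutions (n : ℕ) : ℕ :=
  (Finset.univ.filter fun π : Equiv.Perm (Fin n) => π * π = 1).card

/-- `π ∈ S_n` contains `τ ∈ S_k` as a subsequence. -/
def ContainsSubseq {n k : ℕ} (π : Equiv.Perm (Fin n)) (τ : Equiv.Perm (Fin k)) : Prop :=
  ∃ ι : Fin k → Fin n, StrictMono ι ∧ ∀ m : Fin k, (π (ι m) : ℕ) = (τ m : ℕ)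

/-- `p` is the pattern (order-preserving relabeling) of the word `w`. -/
def IsPattern {j : ℕ} {α : Type*} [LinearOrder α] (w : Fin j → α) (p : Equiv.Perm (Fin j)) : Prop :=
  ∀ a b : Fin j, p a ≤ p b ↔ w a ≤ w b

/-- The pattern of `τ_1 … τ_j` is an involution in S_j. -/
def InitPatternIsInvolution {k : ℕ} (τ : Equiv.Perm (Fin k)) (j : ℕ) : Prop :=
  ∃ hjk : j ≤ k, ∃ p : Equiv.Perm (Fin j),
    IsPattern (fun m : Fin j => τ (Fin.castLE hjk m)) p ∧ p * p = 1

/-- The j-set of `τ`. -/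
def JSet {k : ℕ} (τ : Equiv.Perm (Fin k)) : Set ℕ :=
  {0} ∪ {j | 1 ≤ j ∧ InitPatternIsInvolution τ j}

open scoped Classical in
/-- The j-set of `τ`, as a finset. -/
noncomputable def JFinset {k : ℕ} (τ : Equiv.Perm (Fin k)) : Finset ℕ :=
  (Finset.range (k + 1)).filter fun j => j ∈ JSet τ

/-- Concatenation of decreasing blocks of consecutive integers starting above `s`. -/
def layersFrom : ℕ → List ℕ → List ℕ
  | _, [] => []
  | s, a :: rest => ((List.range a).reverse.map fun t => s + t + 1) ++ layersFrom (s + a) rest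

/-- `τ` is a layered permutation. -/
def IsLayered {k : ℕ} (τ : Equiv.Perm (Fin k)) : Prop :=
  ∃ comp : List ℕ, (∀ a ∈ comp, 0 < a) ∧ comp.sum = k ∧
    List.ofFn (fun m : Fin k => (τ m : ℕ) + 1) = layersFrom 0 comp

open scoped Classical

namespace UEK2

/-! ### Generic helpers -/

def mkPerm (j : ℕ) (g : ℕ → ℕ) (hb : ∀ a, a < j → g a < j) (hinv : ∀ a, a < j → g (g a) = a) :
    Equiv.Perm (Fin j) :=
  ⟨fun a => ⟨g a, hb a a.isLt⟩, fun a => ⟨g a, hb a a.isLt⟩,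
    fun a => Fin.ext (hinv a a.isLt), fun a => Fin.ext (hinv a a.isLt)⟩

lemma mkPerm_val (j : ℕ) (g : ℕ → ℕ) (hb : ∀ a, a < j → g a < j)
    (hinv : ∀ a, a < j → g (g a) = a) (a : Fin j) : (mkPerm j g hb hinv a : ℕ) = g a := rfl

lemma mkPerm_mul (j : ℕ) (g : ℕ → ℕ) (hb : ∀ a, a < j → g a < j)
    (hinv : ∀ a, a < j → g (g a) = a) :
    mkPerm j g hb hinv * mkPerm j g hb hinv = 1 :=
  Equiv.ext fun a => Fin.ext (hinv a a.isLt)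

lemma isPattern_of_psi {j N : ℕ} (v : Fin j → Fin N) (p : Equiv.Perm (Fin j)) (ψ : ℕ → ℕ)
    (hmono : ∀ s t, t < j → s < t → ψ s < ψ t)
    (hv : ∀ a : Fin j, (v a : ℕ) = ψ ((p a : ℕ))) : IsPattern v p := by
  intro a b
  rw [Fin.le_def, Fin.le_def, hv, hv]
  constructor
  · intro h
    rcases eq_or_lt_of_le h with h' | h'
    · rw [h']
    · exact (hmono _ _ (p b).isLt h').le
  · intro h
    by_contra hc
    push_neg at hc
    exact absurd h (not_le.2 (hmono _ _ (p a).isLt hc))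

/-- If `v A` is the maximum and `v B` the second maximum, then any pattern `p` of `v`
satisfies `p A = j-1`, `p B = j-2`. -/
lemma second_max {j N : ℕ} (hj : 2 ≤ j) (v : Fin j → Fin N) (A B : Fin j) (hAB : A ≠ B)
    (hmax : ∀ b, v b ≤ v A) (hsec : ∀ b, b ≠ A → v b ≤ v B)
    (p : Equiv.Perm (Fin j)) (hp : IsPattern v p) :
    p A = ⟨j-1, by omega⟩ ∧ p B = ⟨j-2, by omega⟩ := by
  have hpA : ∀ b, p b ≤ p A := fun b => (hp b A).2 (hmax b)
  obtain ⟨c, hc⟩ := p.surjective ⟨j-1, by omega⟩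
  have h1 : p A = ⟨j-1, by omega⟩ := by
    have h2 := hpA c
    rw [hc] at h2
    exact le_antisymm (Fin.le_def.2 (by have := (p A).isLt; simp; omega)) h2
  refine ⟨h1, ?_⟩
  have hpB : ∀ b, b ≠ A → p b ≤ p B := fun b hb => (hp b B).2 (hsec b hb)
  obtain ⟨c2, hc2⟩ := p.surjective ⟨j-2, by omega⟩
  have hc2A : c2 ≠ A := by
    intro h
    rw [h, h1] at hc2
    have := Fin.mk.injEq .. ▸ hc2
    omega
  have h3 : (⟨j-2, by omega⟩ : Fin j) ≤ p B := hc2 ▸ hpB c2 hc2A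
  have h4 : p B ≠ p A := fun h => hAB (p.injective h).symm
  rw [h1] at h4
  have h5 : (p B : ℕ) < j := (p B).isLt
  rw [Fin.le_def] at h3
  have h6 : (p B : ℕ) ≠ j - 1 := fun h => h4 (Fin.ext h)
  exact Fin.ext (by simp at h3 ⊢; omega)

/-! ### The prefix of an involution through a strictly monotone relabeling -/

def skip2 (m1 m2 t : ℕ) : ℕ := if t < m1 then t else if t+1 < m2 then t+1 else t+2

/-- `natT τ` is the `ℕ`-level version of `τ`. -/
def natT {k : ℕ} (τ : Equiv.Perm (Fin k)) (j : ℕ) : ℕ :=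
  if h : j < k then (τ ⟨j, h⟩ : ℕ) else 0

lemma natT_lt {k : ℕ} (τ : Equiv.Perm (Fin k)) {j : ℕ} (hj : j < k) : natT τ j < k := by
  rw [natT, dif_pos hj]; exact (τ _).isLt

lemma natT_coe {k : ℕ} (τ : Equiv.Perm (Fin k)) (a : Fin k) : natT τ (a : ℕ) = (τ a : ℕ) := by
  rw [natT, dif_pos a.isLt]

lemma prefix_formula {k : ℕ} (hk : 2 ≤ k) (τ : Equiv.Perm (Fin k)) (σ : Equiv.Perm (Fin (k+2)))
    (hσσ : ∀ z, σ (σ z) = z)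
    (hpat : IsPattern (fun m : Fin k => σ (Fin.castLE (Nat.le_add_right k 2) m)) τ)
    (m1 m2 : ℕ) (hm : m1 < m2) (hm2 : m2 ≤ k+1)
    (hxy : ((σ ⟨k, by omega⟩ : ℕ) = m1 ∧ (σ ⟨k+1, by omega⟩ : ℕ) = m2) ∨
           ((σ ⟨k, by omega⟩ : ℕ) = m2 ∧ (σ ⟨k+1, by omega⟩ : ℕ) = m1)) :
    ∀ i : Fin (k+2), (i : ℕ) < k → (σ i : ℕ) = skip2 m1 m2 (natT τ (i : ℕ)) := by
  have hcle : (2:ℕ) ≤ k + 2 := by omega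
  set w : Fin k → Fin (k+2) := fun m => σ (Fin.castLE (by omega) m) with hw
  have hwinj : Function.Injective w := by
    intro a b hab
    exact Fin.castLE_injective _ (σ.injective hab)
  set φ : Fin k → Fin (k+2) := fun t => w (τ.symm t) with hφ
  have hφτ : ∀ i : Fin k, φ (τ i) = w i := by
    intro i; simp only [hφ, Equiv.symm_apply_apply]
  have hφmono : StrictMono φ := by
    intro a b hab
    have h1 : φ a ≤ φ b := by
      have := (hpat (τ.symm a) (τ.symm b)).1
      simp only [Equiv.apply_symm_apply] at this
      exact this hab.le
    have hne : φ a ≠ φ b := by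
      intro h
      have := τ.symm.injective (hwinj h)
      exact absurd this hab.ne
    exact h1.lt_of_ne hne
  set g : Fin k → Fin (k+2) := fun t =>
    ⟨skip2 m1 m2 t, by unfold skip2; split_ifs <;> omega⟩ with hg
  have hgmono : StrictMono g := by
    intro a b hab
    rw [Fin.lt_def]
    show skip2 m1 m2 (a:ℕ) < skip2 m1 m2 (b:ℕ)
    have hab' : (a:ℕ) < (b:ℕ) := hab
    unfold skip2; split_ifs <;> omega
  have hwmem : ∀ c : Fin (k+2), (c ∈ Set.range w) ↔ ((c:ℕ) ≠ m1 ∧ (c:ℕ) ≠ m2) := by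
    intro c
    constructor
    · rintro ⟨t, rfl⟩
      have key : ∀ z : Fin (k+2), (w t : ℕ) = (σ z : ℕ) → (z : ℕ) < k := by
        intro z hz
        have h2 : w t = σ z := Fin.ext hz
        have h3 := σ.injective h2
        have h4 := congrArg Fin.val h3
        simp only [Fin.coe_castLE] at h4
        omega
      constructor
      · intro hc
        rcases hxy with ⟨h1, h2⟩ | ⟨h1, h2⟩
        · have := key ⟨k, by omega⟩ (hc.trans h1.symm); simp at this
        · have := key ⟨k+1, by omega⟩ (hc.trans h2.symm); simp at this
      · intro hc
        rcases hxy with ⟨h1, h2⟩ | ⟨h1, h2⟩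
        · have := key ⟨k+1, by omega⟩ (hc.trans h2.symm); simp at this
        · have := key ⟨k, by omega⟩ (hc.trans h1.symm); simp at this
    · rintro ⟨h1, h2⟩
      by_cases hd : (σ c : ℕ) < k
      · refine ⟨⟨(σ c : ℕ), hd⟩, ?_⟩
        show σ _ = c
        rw [show (Fin.castLE (by omega : k ≤ k+2) ⟨(σ c : ℕ), hd⟩) = σ c from Fin.ext rfl]
        exact hσσ c
      · exfalso
        have hd2 : (σ c : ℕ) = k ∨ (σ c : ℕ) = k + 1 := by have := (σ c).isLt; omega
        rcases hd2 with hd2 | hd2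
        · have hck : σ c = ⟨k, by omega⟩ := Fin.ext hd2
          have : σ (σ c) = σ ⟨k, by omega⟩ := by rw [hck]
          rw [hσσ] at this
          rcases hxy with ⟨hx1, _⟩ | ⟨hx1, _⟩ <;> rw [← this] at hx1 <;> omega
        · have hck : σ c = ⟨k+1, by omega⟩ := Fin.ext hd2
          have : σ (σ c) = σ ⟨k+1, by omega⟩ := by rw [hck]
          rw [hσσ] at this
          rcases hxy with ⟨_, hx2⟩ | ⟨_, hx2⟩ <;> rw [← this] at hx2 <;> omega
  have hgmem : ∀ c : Fin (k+2), (c ∈ Set.range g) ↔ ((c:ℕ) ≠ m1 ∧ (c:ℕ) ≠ m2) := by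
    intro c
    constructor
    · rintro ⟨t, rfl⟩
      have ht := t.isLt
      show skip2 m1 m2 (t:ℕ) ≠ m1 ∧ skip2 m1 m2 (t:ℕ) ≠ m2
      unfold skip2; split_ifs <;> constructor <;> omega
    · rintro ⟨h1, h2⟩
      have hc := c.isLt
      by_cases hcm : (c:ℕ) < m1
      · refine ⟨⟨(c:ℕ), by omega⟩, Fin.ext ?_⟩
        show skip2 m1 m2 (c:ℕ) = (c:ℕ)
        unfold skip2; split_ifs <;> omega
      · by_cases hcm2 : (c:ℕ) < m2
        · refine ⟨⟨(c:ℕ)-1, by omega⟩, Fin.ext ?_⟩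
          show skip2 m1 m2 ((c:ℕ)-1) = (c:ℕ)
          unfold skip2; split_ifs <;> omega
        · refine ⟨⟨(c:ℕ)-2, by omega⟩, Fin.ext ?_⟩
          show skip2 m1 m2 ((c:ℕ)-2) = (c:ℕ)
          unfold skip2; split_ifs <;> omega
  have hφw : Set.range φ = Set.range w := by
    ext c
    constructor
    · rintro ⟨t, rfl⟩; exact ⟨τ.symm t, rfl⟩
    · rintro ⟨i, rfl⟩; exact ⟨τ i, hφτ i⟩
  have hφg : φ = g := (hφmono.range_inj hgmono).1 (by
    rw [hφw]; ext c; rw [hwmem c, hgmem c])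
  intro i hi
  have h1 : σ i = w ⟨(i:ℕ), hi⟩ := congrArg σ (Fin.ext rfl)
  rw [h1, ← hφτ ⟨(i:ℕ), hi⟩, hφg]
  show skip2 m1 m2 ((τ ⟨(i:ℕ), hi⟩ : ℕ)) = _
  rw [← natT_coe τ ⟨(i:ℕ), hi⟩]

/-! ### Structure of layered permutations -/

lemma layersFrom_block (comp : List ℕ) : ∀ s i, i < comp.sum →
    ∃ t b, t ≤ i ∧ i < t + b ∧ t + b ≤ comp.sum ∧
      ∀ j, t ≤ j → j < t + b → (layersFrom s comp)[j]? = some (s + (2*t + b - j)) := by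
  induction comp with
  | nil => simp
  | cons a rest ih =>
    intro s i hi
    simp only [List.sum_cons] at hi
    by_cases hia : i < a
    · refine ⟨0, a, Nat.zero_le _, by omega, by simp only [List.sum_cons]; omega, ?_⟩
      intro j hj hj2
      show (layersFrom s (a::rest))[j]? = _
      rw [layersFrom]
      rw [List.getElem?_append_left (by simp; omega)]
      rw [List.getElem?_map]
      rw [List.getElem?_eq_getElem (by simp; omega)]
      simp only [List.getElem_reverse, List.getElem_range, List.length_reverse,
        List.length_range, Option.map_some]
      exact congrArg some (by omega)
    · obtain ⟨t, b, h1, h2, h3, h4⟩ := ih (s+a) (i-a) (by omega)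
      refine ⟨t+a, b, by omega, by omega, by simp only [List.sum_cons]; omega, ?_⟩
      intro j hj hj2
      rw [layersFrom, List.getElem?_append_right (by simp; omega)]
      have h5 := h4 (j-a) (by omega) (by omega)
      simp only [List.length_map, List.length_reverse, List.length_range]
      rw [h5]
      exact congrArg some (by omega)

lemma perm_block {k : ℕ} (τ : Equiv.Perm (Fin k)) (hτ : IsLayered τ) :
    ∀ i, i < k → ∃ t b, t ≤ i ∧ i < t + b ∧ t + b ≤ k ∧
      ∀ j, t ≤ j → j < t + b → natT τ j = 2*t + b - 1 - j := by
  obtain ⟨comp, _, hsum, heq⟩ := hτ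
  intro i hi
  obtain ⟨t, b, h1, h2, h3, h4⟩ := layersFrom_block comp 0 i (by omega)
  refine ⟨t, b, h1, h2, by omega, ?_⟩
  intro j hj1 hj2
  have hjk : j < k := by omega
  have h5 := h4 j hj1 hj2
  rw [← heq] at h5
  rw [List.getElem?_eq_getElem (by simp; omega)] at h5
  rw [List.getElem_ofFn] at h5
  simp only [Option.some.injEq] at h5
  rw [natT, dif_pos hjk]
  have h6 : (τ ⟨j, hjk⟩ : ℕ) + 1 = 0 + (2 * t + b - j) := h5
  omega

lemma tau_invol {k : ℕ} (τ : Equiv.Perm (Fin k)) (hτ : IsLayered τ) :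
    ∀ j, j < k → natT τ (natT τ j) = j := by
  intro j hj
  obtain ⟨t, b, h1, h2, h3, h4⟩ := perm_block τ hτ j hj
  have h5 := h4 j h1 h2
  have h6 := h4 (natT τ j) (by omega) (by omega)
  omega

lemma tau_top {k : ℕ} (hk : 1 ≤ k) (τ : Equiv.Perm (Fin k)) (hτ : IsLayered τ) :
    ∃ u, u ≤ k - 1 ∧ ∀ j, u ≤ j → j < k → natT τ j = u + k - 1 - j := by
  obtain ⟨t, b, h1, h2, h3, h4⟩ := perm_block τ hτ (k-1) (by omega)
  refine ⟨t, by omega, ?_⟩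
  intro j hj1 hj2
  have := h4 j hj1 (by omega)
  omega

lemma tau_low {k u : ℕ} (τ : Equiv.Perm (Fin k)) (hinv : ∀ j, j < k → natT τ (natT τ j) = j)
    (hk : 1 ≤ k) (hu : u ≤ k - 1)
    (hF1 : ∀ j, u ≤ j → j < k → natT τ j = u + k - 1 - j) :
    ∀ j, j < u → natT τ j < u := by
  intro j hj
  by_contra hc
  push_neg at hc
  have hjk : j < k := by omega
  have hck : natT τ j < k := natT_lt τ hjk
  have h5 := hF1 (natT τ j) hc hck
  have h6 := hinv j hjk
  omega

lemma tau_second {k : ℕ} (hk : 2 ≤ k) (τ : Equiv.Perm (Fin k)) (hτ : IsLayered τ)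
    (htop : natT τ (k-1) = k - 1) :
    ∃ u', u' ≤ k - 2 ∧ ∀ j, u' ≤ j → j < k - 1 → natT τ j = u' + k - 2 - j := by
  obtain ⟨t, b, h1, h2, h3, h4⟩ := perm_block τ hτ (k-2) (by omega)
  have htb : t + b ≤ k - 1 := by
    by_contra hc
    push_neg at hc
    have h5 := h4 (k-1) (by omega) (by omega)
    omega
  refine ⟨t, by omega, ?_⟩
  intro j hja hjb
  have := h4 j hja (by omega)
  omega

lemma tau_inj {k : ℕ} (τ : Equiv.Perm (Fin k)) (hinv : ∀ j, j < k → natT τ (natT τ j) = j) :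
    ∀ a b, a < k → b < k → natT τ a = natT τ b → a = b := by
  intro a b ha hb h
  have h1 := hinv a ha
  have h2 := hinv b hb
  rw [h] at h1
  omega


/-! ### The explicit constructions -/

def natFA (k u : ℕ) (T : ℕ → ℕ) (i : ℕ) : ℕ :=
  if i < u then T i else if i = u then k+1 else if i < k then u+k-i else if i = k then k else u

lemma natFA_e1 (k u : ℕ) (T : ℕ → ℕ) {i : ℕ} (h : i < u) : natFA k u T i = T i := by
  rw [natFA, if_pos h]

lemma natFA_e2 (k u : ℕ) (T : ℕ → ℕ) : natFA k u T u = k+1 := by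
  rw [natFA, if_neg (lt_irrefl u), if_pos rfl]

lemma natFA_e3 (k u : ℕ) (T : ℕ → ℕ) {i : ℕ} (h1 : u < i) (h2 : i < k) :
    natFA k u T i = u+k-i := by
  rw [natFA, if_neg (by omega), if_neg (by omega), if_pos h2]

lemma natFA_e4 (k u : ℕ) (T : ℕ → ℕ) (hu : u < k) : natFA k u T k = k := by
  rw [natFA, if_neg (by omega), if_neg (by omega), if_neg (lt_irrefl k), if_pos rfl]

lemma natFA_e5 (k u : ℕ) (T : ℕ → ℕ) (hu : u < k) : natFA k u T (k+1) = u := by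
  rw [natFA, if_neg (by omega), if_neg (by omega), if_neg (by omega), if_neg (by omega)]

lemma natFA_bound (k u : ℕ) (T : ℕ → ℕ) (hu : u < k) (hT : ∀ j, j < k → T j < k) :
    ∀ a, a < k+2 → natFA k u T a < k+2 := by
  intro a ha
  rw [natFA]
  split_ifs with h1 h2 h3 h4
  · exact lt_of_lt_of_le (hT a (by omega)) (by omega)
  all_goals omega

lemma natFA_invol (k u : ℕ) (T : ℕ → ℕ) (hu : u + 2 ≤ k) (hT : ∀ j, j < k → T j < k)
    (hTinv : ∀ j, j < k → T (T j) = j)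
    (hF1 : ∀ j, u ≤ j → j < k → T j = u+k-1-j) (hF2 : ∀ j, j < u → T j < u) :
    ∀ a, a < k+2 → natFA k u T (natFA k u T a) = a := by
  intro a ha
  by_cases h1 : a < u
  · rw [natFA_e1 k u T h1, natFA_e1 k u T (hF2 a h1)]
    exact hTinv a (by omega)
  · by_cases h2 : a = u
    · rw [h2]; rw [natFA_e2, natFA_e5 k u T (by omega)]
    · by_cases h3 : a < k
      · rw [natFA_e3 k u T (by omega) h3, natFA_e3 k u T (by omega) (by omega)]
        omega
      · by_cases h4 : a = k
        · rw [h4]; rw [natFA_e4 k u T (by omega), natFA_e4 k u T (by omega)]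
        · have h5 : a = k+1 := by omega
          rw [h5]; rw [natFA_e5 k u T (by omega), natFA_e2]

def natFB (k u' : ℕ) (T : ℕ → ℕ) (i : ℕ) : ℕ :=
  if i < u' then T i else if i = u' then k else if i < k-1 then u'+k-1-i
  else if i = k-1 then k+1 else if i = k then u' else k-1

lemma natFB_e1 (k u' : ℕ) (T : ℕ → ℕ) {i : ℕ} (h : i < u') : natFB k u' T i = T i := by
  rw [natFB, if_pos h]

lemma natFB_e2 (k u' : ℕ) (T : ℕ → ℕ) : natFB k u' T u' = k := by
  rw [natFB, if_neg (lt_irrefl u'), if_pos rfl]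

lemma natFB_e3 (k u' : ℕ) (T : ℕ → ℕ) {i : ℕ} (h1 : u' < i) (h2 : i < k-1) :
    natFB k u' T i = u'+k-1-i := by
  rw [natFB, if_neg (by omega), if_neg (by omega), if_pos h2]

lemma natFB_e4 (k u' : ℕ) (T : ℕ → ℕ) (h : u' < k-1) : natFB k u' T (k-1) = k+1 := by
  rw [natFB, if_neg (by omega), if_neg (by omega), if_neg (lt_irrefl (k-1)), if_pos rfl]

lemma natFB_e5 (k u' : ℕ) (T : ℕ → ℕ) (hk : 2 ≤ k) (h : u' < k-1) : natFB k u' T k = u' := by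
  rw [natFB, if_neg (by omega), if_neg (by omega), if_neg (by omega), if_neg (by omega),
    if_pos rfl]

lemma natFB_e6 (k u' : ℕ) (T : ℕ → ℕ) (hk : 2 ≤ k) (h : u' < k-1) :
    natFB k u' T (k+1) = k-1 := by
  rw [natFB, if_neg (by omega), if_neg (by omega), if_neg (by omega), if_neg (by omega),
    if_neg (by omega)]

lemma natFB_bound (k u' : ℕ) (T : ℕ → ℕ) (hk : 2 ≤ k) (hu' : u' < k-1)
    (hT : ∀ j, j < k → T j < k) :
    ∀ a, a < k+2 → natFB k u' T a < k+2 := by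
  intro a ha
  rw [natFB]
  split_ifs with h1 h2 h3 h4 h5
  · exact lt_of_lt_of_le (hT a (by omega)) (by omega)
  all_goals omega

lemma natFB_invol (k u' : ℕ) (T : ℕ → ℕ) (hk : 2 ≤ k) (hu' : u' ≤ k - 2)
    (hT : ∀ j, j < k → T j < k) (hTinv : ∀ j, j < k → T (T j) = j)
    (hF3 : ∀ j, u' ≤ j → j < k-1 → T j = u'+k-2-j) (hF3b : ∀ j, j < u' → T j < u') :
    ∀ a, a < k+2 → natFB k u' T (natFB k u' T a) = a := by
  intro a ha
  have hu'2 : u' < k - 1 := by omega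
  by_cases h1 : a < u'
  · rw [natFB_e1 k u' T h1, natFB_e1 k u' T (hF3b a h1)]
    exact hTinv a (by omega)
  · by_cases h2 : a = u'
    · rw [h2]; rw [natFB_e2, natFB_e5 k u' T hk hu'2]
    · by_cases h3 : a < k-1
      · rw [natFB_e3 k u' T (by omega) h3, natFB_e3 k u' T (by omega) (by omega)]
        omega
      · by_cases h4 : a = k-1
        · rw [h4]; rw [natFB_e4 k u' T hu'2, natFB_e6 k u' T hk hu'2]
      
        · by_cases h5 : a = k
          · rw [h5]; rw [natFB_e5 k u' T hk hu'2, natFB_e2]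
          · have h6 : a = k+1 := by omega
            rw [h6]; rw [natFB_e6 k u' T hk hu'2, natFB_e4 k u' T hu'2]

def natPA (k u : ℕ) (T : ℕ → ℕ) (a : ℕ) : ℕ :=
  if a < u then T a else if a = u then k else if a < k then u+k-a else u

lemma natPA_e1 (k u : ℕ) (T : ℕ → ℕ) {a : ℕ} (h : a < u) : natPA k u T a = T a := by
  rw [natPA, if_pos h]

lemma natPA_e2 (k u : ℕ) (T : ℕ → ℕ) : natPA k u T u = k := by
  rw [natPA, if_neg (lt_irrefl u), if_pos rfl]

lemma natPA_e3 (k u : ℕ) (T : ℕ → ℕ) {a : ℕ} (h1 : u < a) (h2 : a < k) :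
    natPA k u T a = u+k-a := by
  rw [natPA, if_neg (by omega), if_neg (by omega), if_pos h2]

lemma natPA_e4 (k u : ℕ) (T : ℕ → ℕ) (hu : u < k) : natPA k u T k = u := by
  rw [natPA, if_neg (by omega), if_neg (by omega), if_neg (lt_irrefl k)]

lemma natPA_bound (k u : ℕ) (T : ℕ → ℕ) (hu : u < k) (hT : ∀ j, j < k → T j < k) :
    ∀ a, a < k+1 → natPA k u T a < k+1 := by
  intro a ha
  rw [natPA]
  split_ifs with h1 h2 h3
  · exact lt_of_lt_of_le (hT a (by omega)) (by omega)
  all_goals omega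

lemma natPA_invol (k u : ℕ) (T : ℕ → ℕ) (hu : u < k) (hT : ∀ j, j < k → T j < k)
    (hTinv : ∀ j, j < k → T (T j) = j) (hF2 : ∀ j, j < u → T j < u) :
    ∀ a, a < k+1 → natPA k u T (natPA k u T a) = a := by
  intro a ha
  by_cases h1 : a < u
  · rw [natPA_e1 k u T h1, natPA_e1 k u T (hF2 a h1)]
    exact hTinv a (by omega)
  · by_cases h2 : a = u
    · rw [h2]; rw [natPA_e2, natPA_e4 k u T hu]
    · by_cases h3 : a < k
      · rw [natPA_e3 k u T (by omega) h3, natPA_e3 k u T (by omega) (by omega)]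
        omega
      · have h4 : a = k := by omega
        rw [h4]; rw [natPA_e4 k u T hu, natPA_e2]

def natPW1 (k : ℕ) (T : ℕ → ℕ) (a : ℕ) : ℕ := if a < k then T a else k

lemma natPW1_e1 (k : ℕ) (T : ℕ → ℕ) {a : ℕ} (h : a < k) : natPW1 k T a = T a := by
  rw [natPW1, if_pos h]

lemma natPW1_e2 (k : ℕ) (T : ℕ → ℕ) : natPW1 k T k = k := by
  rw [natPW1, if_neg (lt_irrefl k)]

lemma natPW1_bound (k : ℕ) (T : ℕ → ℕ) (hT : ∀ j, j < k → T j < k) :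
    ∀ a, a < k+1 → natPW1 k T a < k+1 := by
  intro a ha
  rw [natPW1]
  split_ifs with h1
  · exact lt_of_lt_of_le (hT a h1) (by omega)
  · omega

lemma natPW1_invol (k : ℕ) (T : ℕ → ℕ) (hT : ∀ j, j < k → T j < k)
    (hTinv : ∀ j, j < k → T (T j) = j) :
    ∀ a, a < k+1 → natPW1 k T (natPW1 k T a) = a := by
  intro a ha
  by_cases h1 : a < k
  · rw [natPW1_e1 k T h1, natPW1_e1 k T (hT a h1)]
    exact hTinv a h1
  · have h2 : a = k := by omega
    rw [h2]; rw [natPW1_e2, natPW1_e2]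

def natPW4 (k : ℕ) (T : ℕ → ℕ) (a : ℕ) : ℕ :=
  if a < k-1 then T a else if a = k-1 then k else k-1

lemma natPW4_e1 (k : ℕ) (T : ℕ → ℕ) {a : ℕ} (h : a < k-1) : natPW4 k T a = T a := by
  rw [natPW4, if_pos h]

lemma natPW4_e2 (k : ℕ) (T : ℕ → ℕ) : natPW4 k T (k-1) = k := by
  rw [natPW4, if_neg (lt_irrefl (k-1)), if_pos rfl]

lemma natPW4_e3 (k : ℕ) (T : ℕ → ℕ) (hk : 2 ≤ k) : natPW4 k T k = k-1 := by
  rw [natPW4, if_neg (by omega), if_neg (by omega)]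

lemma natPW4_bound (k : ℕ) (T : ℕ → ℕ) (hk : 2 ≤ k) (hsmall : ∀ j, j < k-1 → T j < k-1) :
    ∀ a, a < k+1 → natPW4 k T a < k+1 := by
  intro a ha
  rw [natPW4]
  split_ifs with h1 h2
  · exact lt_of_lt_of_le (hsmall a h1) (by omega)
  all_goals omega

lemma natPW4_invol (k : ℕ) (T : ℕ → ℕ) (hk : 2 ≤ k) (hsmall : ∀ j, j < k-1 → T j < k-1)
    (hTinv : ∀ j, j < k → T (T j) = j) :
    ∀ a, a < k+1 → natPW4 k T (natPW4 k T a) = a := by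
  intro a ha
  by_cases h1 : a < k-1
  · rw [natPW4_e1 k T h1, natPW4_e1 k T (hsmall a h1)]
    exact hTinv a (by omega)
  · by_cases h2 : a = k-1
    · rw [h2]; rw [natPW4_e2, natPW4_e3 k T hk]
    · have h3 : a = k := by omega
      rw [h3]; rw [natPW4_e3 k T hk, natPW4_e2]

/-- Build the witness pattern for the `(k+1)`-prefix. -/
lemma witness {k : ℕ} (σ : Equiv.Perm (Fin (k+2))) (g ψ : ℕ → ℕ)
    (hb : ∀ a, a < k+1 → g a < k+1) (hg : ∀ a, a < k+1 → g (g a) = a)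
    (hmono : ∀ s t, t < k+1 → s < t → ψ s < ψ t)
    (hv : ∀ a : Fin (k+1), (σ (Fin.castSucc a) : ℕ) = ψ (g (a : ℕ))) :
    ∃ p : Equiv.Perm (Fin (k+1)),
      IsPattern (fun m : Fin (k+1) => σ (Fin.castSucc m)) p ∧ p * p = 1 :=
  ⟨mkPerm (k+1) g hb hg,
    isPattern_of_psi _ _ ψ hmono (fun a => by rw [hv a]; rfl),
    mkPerm_mul _ _ _ _⟩

lemma prefix_pattern {k : ℕ} (σ : Equiv.Perm (Fin (k+2))) (τ : Equiv.Perm (Fin k)) (ψ : ℕ → ℕ)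
    (hmono : ∀ s t, t < k → s < t → ψ s < ψ t)
    (hv : ∀ a : Fin k, (σ (Fin.castLE (Nat.le_add_right k 2) a) : ℕ) = ψ (natT τ (a:ℕ))) :
    IsPattern (fun m : Fin k => σ (Fin.castLE (Nat.le_add_right k 2) m)) τ :=
  isPattern_of_psi _ _ ψ hmono (fun a => by rw [hv a, natT_coe])

end UEK2

theorem unique_extension_kplus2 {k : ℕ} (hk : 2 ≤ k) (τ : Equiv.Perm (Fin k))
    (hτ : IsLayered τ) :
    ∃! σ : Equiv.Perm (Fin (k + 2)),
      σ * σ = 1 ∧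
      IsPattern (fun m : Fin k => σ (Fin.castLE (by omega) m)) τ ∧
      ¬ ∃ p : Equiv.Perm (Fin (k + 1)),
          IsPattern (fun m : Fin (k + 1) => σ (Fin.castSucc m)) p ∧ p * p = 1 := by
  classical
  have hTinv := UEK2.tau_invol τ hτ
  have hT : ∀ j, j < k → UEK2.natT τ j < k := fun j hj => UEK2.natT_lt τ hj
  obtain ⟨u, hu1, hF1⟩ := UEK2.tau_top (by omega) τ hτ
  have hF2 : ∀ j, j < u → UEK2.natT τ j < u := UEK2.tau_low τ hTinv (by omega) hu1 hF1
  have hTinj := UEK2.tau_inj τ hTinv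
  have hTu : UEK2.natT τ u = k - 1 := by have := hF1 u le_rfl (by omega); omega
  have hklt : k < k + 2 := by omega
  have hk1lt : k + 1 < k + 2 := by omega
  have hult1 : u < k + 1 := by omega
  have hklt1 : k < k + 1 := by omega
  by_cases hA : u + 2 ≤ k
  · refine ⟨UEK2.mkPerm (k+2) (UEK2.natFA k u (UEK2.natT τ))
        (UEK2.natFA_bound k u _ (by omega) hT)
        (UEK2.natFA_invol k u _ hA hT hTinv hF1 hF2), ⟨UEK2.mkPerm_mul _ _ _ _, ?_, ?_⟩, ?_⟩
    · -- the k-prefix has pattern τ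
      apply UEK2.prefix_pattern _ τ
          (fun t => if t < u then t else if t < k-1 then t+1 else k+1)
      · intro s t ht hst; try dsimp only
        split_ifs <;> omega
      · intro a
        have ha := a.isLt
        show UEK2.natFA k u (UEK2.natT τ) (a:ℕ) =
          (if UEK2.natT τ (a:ℕ) < u then UEK2.natT τ (a:ℕ)
            else if UEK2.natT τ (a:ℕ) < k-1 then UEK2.natT τ (a:ℕ) + 1 else k+1)
        by_cases h1 : (a:ℕ) < u
        · rw [UEK2.natFA_e1 k u _ h1, if_pos (hF2 _ h1)]
        · by_cases h2 : (a:ℕ) = u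
          · rw [h2, UEK2.natFA_e2, hTu, if_neg (by omega), if_neg (by omega)]
          · have h3 : u < (a:ℕ) := by omega
            rw [UEK2.natFA_e3 k u _ h3 ha, hF1 (a:ℕ) (by omega) ha,
              if_neg (by omega), if_pos (by omega)]
            omega
    · -- the (k+1)-prefix pattern is not an involution
      rintro ⟨p, hp, hpp⟩
      have hpp' : ∀ z, p (p z) = z := fun z => by
        have h := congrArg (fun q : Equiv.Perm (Fin (k+1)) => q z) hpp
        simpa using h
      have hAB : (⟨u, hult1⟩ : Fin (k+1)) ≠ ⟨k, hklt1⟩ := by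
        intro h
        have h5 : u = k := congrArg Fin.val h
        omega
      obtain ⟨hpA, hpB⟩ := UEK2.second_max (by omega) _ ⟨u, hult1⟩ ⟨k, hklt1⟩ hAB
        (fun b => by
          rw [Fin.le_def]
          show UEK2.natFA k u (UEK2.natT τ) (b:ℕ) ≤ UEK2.natFA k u (UEK2.natT τ) u
          rw [UEK2.natFA_e2]
          have := UEK2.natFA_bound k u (UEK2.natT τ) (by omega) hT (b:ℕ)
            (by have := b.isLt; omega)
          omega)
        (fun b hb => by
          rw [Fin.le_def]
          show UEK2.natFA k u (UEK2.natT τ) (b:ℕ) ≤ UEK2.natFA k u (UEK2.natT τ) k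
          rw [UEK2.natFA_e4 k u _ (by omega)]
          have hbne : (b:ℕ) ≠ u := fun h => hb (Fin.ext h)
          by_cases h1 : (b:ℕ) < u
          · rw [UEK2.natFA_e1 k u _ h1]
            have := hF2 _ h1
            omega
          · by_cases h3 : (b:ℕ) < k
            · rw [UEK2.natFA_e3 k u _ (by omega) h3]
              omega
            · have hbk : (b:ℕ) = k := by have := b.isLt; omega
              rw [hbk, UEK2.natFA_e4 k u _ (by omega)]) p hp
      have h1 : p ⟨u, hult1⟩ = ⟨k, hklt1⟩ := hpA.trans (Fin.ext (show k+1-1 = k by omega))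
      have h2 := hpp' ⟨u, hult1⟩
      rw [h1] at h2
      have h4 : k+1-2 = u := congrArg Fin.val (hpB.symm.trans h2)
      omega
    · -- uniqueness
      intro σ hσ
      obtain ⟨hσ1, hσ2, hσ3⟩ := hσ
      have hσσ : ∀ z, σ (σ z) = z := fun z => by
        have h := congrArg (fun q : Equiv.Perm (Fin (k+2)) => q z) hσ1
        simpa using h
      by_cases hx1 : (σ (⟨k, hklt⟩ : Fin (k+2)) : ℕ) = k + 1
      · -- σ(k) = k+1: the (k+1)-prefix pattern is τ with a fixed point appended
        exfalso; apply hσ3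
        have h0 : σ ⟨k, hklt⟩ = ⟨k+1, hk1lt⟩ := Fin.ext hx1
        have hyK : σ ⟨k+1, hk1lt⟩ = ⟨k, hklt⟩ := by
          have h1 := hσσ ⟨k, hklt⟩
          rw [h0] at h1
          exact h1
        have hy1 : (σ (⟨k+1, hk1lt⟩ : Fin (k+2)) : ℕ) = k := by rw [hyK]
        have hpre : ∀ i : Fin (k+2), (i:ℕ) < k →
            (σ i : ℕ) = UEK2.skip2 k (k+1) (UEK2.natT τ (i:ℕ)) :=
          UEK2.prefix_formula hk τ σ hσσ hσ2 k (k+1) (by omega) (by omega) (Or.inr ⟨hx1, hy1⟩)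
        refine UEK2.witness σ (UEK2.natPW1 k (UEK2.natT τ)) (fun t => if t < k then t else t+1)
          (UEK2.natPW1_bound k _ hT) (UEK2.natPW1_invol k _ hT hTinv)
          (by intro s t ht hst; (try dsimp only); split_ifs <;> omega) ?_
        intro a
        by_cases hak : (a:ℕ) < k
        · have h5 : (σ (Fin.castSucc a) : ℕ) = UEK2.skip2 k (k+1) (UEK2.natT τ (a:ℕ)) :=
            hpre (Fin.castSucc a) hak
          rw [h5, UEK2.natPW1_e1 k _ hak]
          have := hT _ hak
          show UEK2.skip2 k (k+1) (UEK2.natT τ (a:ℕ)) =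
            (if UEK2.natT τ (a:ℕ) < k then UEK2.natT τ (a:ℕ) else UEK2.natT τ (a:ℕ) + 1)
          unfold UEK2.skip2
          split_ifs <;> omega
        · have hak2 : (a:ℕ) = k := by have := a.isLt; omega
          have hcs : Fin.castSucc a = (⟨k, hklt⟩ : Fin (k+2)) := Fin.ext hak2
          have h5 : (σ (Fin.castSucc a) : ℕ) = k + 1 := by rw [hcs]; exact hx1
          rw [h5, hak2, UEK2.natPW1_e2]
          show k + 1 = (if k < k then k else k+1)
          rw [if_neg (lt_irrefl k)]
      · by_cases hx2 : (σ (⟨k, hklt⟩ : Fin (k+2)) : ℕ) = k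
        · -- σ(k) = k
          have hxK : σ ⟨k, hklt⟩ = ⟨k, hklt⟩ := Fin.ext hx2
          by_cases hy2 : (σ (⟨k+1, hk1lt⟩ : Fin (k+2)) : ℕ) = k + 1
          · -- σ(k+1) = k+1 as well: pattern is τ with a fixed point appended
            exfalso; apply hσ3
            have hpre : ∀ i : Fin (k+2), (i:ℕ) < k →
                (σ i : ℕ) = UEK2.skip2 k (k+1) (UEK2.natT τ (i:ℕ)) :=
              UEK2.prefix_formula hk τ σ hσσ hσ2 k (k+1) (by omega) (by omega)
                (Or.inl ⟨hx2, hy2⟩)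
            refine UEK2.witness σ (UEK2.natPW1 k (UEK2.natT τ)) (fun t => t)
              (UEK2.natPW1_bound k _ hT) (UEK2.natPW1_invol k _ hT hTinv)
              (fun s t ht hst => hst) ?_
            intro a
            by_cases hak : (a:ℕ) < k
            · have h5 : (σ (Fin.castSucc a) : ℕ) = UEK2.skip2 k (k+1) (UEK2.natT τ (a:ℕ)) :=
                hpre (Fin.castSucc a) hak
              rw [h5, UEK2.natPW1_e1 k _ hak]
              have := hT _ hak
              show UEK2.skip2 k (k+1) (UEK2.natT τ (a:ℕ)) = UEK2.natT τ (a:ℕ)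
              unfold UEK2.skip2
              split_ifs <;> omega
            · have hak2 : (a:ℕ) = k := by have := a.isLt; omega
              have hcs : Fin.castSucc a = (⟨k, hklt⟩ : Fin (k+2)) := Fin.ext hak2
              have h5 : (σ (Fin.castSucc a) : ℕ) = k := by rw [hcs]; exact hx2
              rw [h5, hak2, UEK2.natPW1_e2]
          · -- σ(k+1) = y < k; then y = u and σ is our σ₀ (case A)
            have hyne : (σ (⟨k+1, hk1lt⟩ : Fin (k+2)) : ℕ) ≠ k := by
              intro h
              have h2 : σ ⟨k+1, hk1lt⟩ = ⟨k, hklt⟩ := Fin.ext h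
              have h3 : (⟨k+1, hk1lt⟩ : Fin (k+2)) = ⟨k, hklt⟩ :=
                σ.injective (h2.trans hxK.symm)
              have h5 : k + 1 = k := congrArg Fin.val h3
              omega
            have hylt : (σ (⟨k+1, hk1lt⟩ : Fin (k+2)) : ℕ) < k := by
              have := (σ (⟨k+1, hk1lt⟩ : Fin (k+2))).isLt
              omega
            have hpre : ∀ i : Fin (k+2), (i:ℕ) < k →
                (σ i : ℕ) = UEK2.skip2 ((σ (⟨k+1, hk1lt⟩ : Fin (k+2)) : ℕ)) k
                  (UEK2.natT τ (i:ℕ)) :=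
              UEK2.prefix_formula hk τ σ hσσ hσ2 _ k hylt (by omega) (Or.inr ⟨hx2, rfl⟩)
            have hyK : σ (σ ⟨k+1, hk1lt⟩) = ⟨k+1, hk1lt⟩ := hσσ _
            have h6 : (σ (σ ⟨k+1, hk1lt⟩) : ℕ) =
                UEK2.skip2 ((σ (⟨k+1, hk1lt⟩ : Fin (k+2)) : ℕ)) k
                  (UEK2.natT τ ((σ (⟨k+1, hk1lt⟩ : Fin (k+2)) : ℕ))) :=
              hpre (σ ⟨k+1, hk1lt⟩) hylt
            rw [hyK] at h6
            have h6' : k + 1 = UEK2.skip2 ((σ (⟨k+1, hk1lt⟩ : Fin (k+2)) : ℕ)) k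
                (UEK2.natT τ ((σ (⟨k+1, hk1lt⟩ : Fin (k+2)) : ℕ))) := h6
            have hb := hT _ hylt
            have h7 : UEK2.natT τ ((σ (⟨k+1, hk1lt⟩ : Fin (k+2)) : ℕ)) = k - 1 := by
              unfold UEK2.skip2 at h6'
              split_ifs at h6' <;> omega
            have h8 : (σ (⟨k+1, hk1lt⟩ : Fin (k+2)) : ℕ) = u :=
              hTinj _ _ hylt (by omega) (by rw [h7, hTu])
            -- conclude σ = σ₀
            apply Equiv.ext
            intro z
            apply Fin.ext
            show (σ z : ℕ) = UEK2.natFA k u (UEK2.natT τ) (z : ℕ)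
            by_cases hzk : (z:ℕ) < k
            · have h9 : (σ z : ℕ) = UEK2.skip2 u k (UEK2.natT τ (z:ℕ)) := by
                have := hpre z hzk
                rw [h8] at this
                exact this
              rw [h9]
              by_cases hz1 : (z:ℕ) < u
              · rw [UEK2.natFA_e1 k u _ hz1]
                have := hF2 _ hz1
                unfold UEK2.skip2
                rw [if_pos this]
              · by_cases hz2 : (z:ℕ) = u
                · rw [hz2, UEK2.natFA_e2, hTu]
                  unfold UEK2.skip2
                  rw [if_neg (by omega), if_neg (by omega)]
                  omega
                · have hz3 : u < (z:ℕ) := by omega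
                  rw [UEK2.natFA_e3 k u _ hz3 hzk, hF1 (z:ℕ) (by omega) hzk]
                  unfold UEK2.skip2
                  rw [if_neg (by omega), if_pos (by omega)]
                  omega
            · by_cases hzk2 : (z:ℕ) = k
              · have hz : z = ⟨k, hklt⟩ := Fin.ext hzk2
                rw [hz]
                show (σ (⟨k, hklt⟩ : Fin (k+2)) : ℕ) = UEK2.natFA k u (UEK2.natT τ) k
                rw [UEK2.natFA_e4 k u _ (by omega)]
                exact hx2
              · have hzk3 : (z:ℕ) = k+1 := by have := z.isLt; omega
                have hz : z = ⟨k+1, hk1lt⟩ := Fin.ext hzk3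
                rw [hz]
                show (σ (⟨k+1, hk1lt⟩ : Fin (k+2)) : ℕ) = UEK2.natFA k u (UEK2.natT τ) (k+1)
                rw [UEK2.natFA_e5 k u _ (by omega)]
                exact h8
        · -- σ(k) = x < k
          have hxlt : (σ (⟨k, hklt⟩ : Fin (k+2)) : ℕ) < k := by
            have := (σ (⟨k, hklt⟩ : Fin (k+2))).isLt
            omega
          have hxK : σ (σ ⟨k, hklt⟩) = ⟨k, hklt⟩ := hσσ _
          by_cases hy2 : (σ (⟨k+1, hk1lt⟩ : Fin (k+2)) : ℕ) = k + 1
          · -- σ(k+1) = k+1: σ would be the "τ with last layer extended" involution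
            exfalso; apply hσ3
            have hpre : ∀ i : Fin (k+2), (i:ℕ) < k →
                (σ i : ℕ) = UEK2.skip2 ((σ (⟨k, hklt⟩ : Fin (k+2)) : ℕ)) (k+1)
                  (UEK2.natT τ (i:ℕ)) :=
              UEK2.prefix_formula hk τ σ hσσ hσ2 _ (k+1) (by omega) (by omega)
                (Or.inl ⟨rfl, hy2⟩)
            have h6 : (σ (σ ⟨k, hklt⟩) : ℕ) =
                UEK2.skip2 ((σ (⟨k, hklt⟩ : Fin (k+2)) : ℕ)) (k+1)
                  (UEK2.natT τ ((σ (⟨k, hklt⟩ : Fin (k+2)) : ℕ))) :=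
              hpre (σ ⟨k, hklt⟩) hxlt
            rw [hxK] at h6
            have h6' : k = UEK2.skip2 ((σ (⟨k, hklt⟩ : Fin (k+2)) : ℕ)) (k+1)
                (UEK2.natT τ ((σ (⟨k, hklt⟩ : Fin (k+2)) : ℕ))) := h6
            have hb := hT _ hxlt
            have h7 : UEK2.natT τ ((σ (⟨k, hklt⟩ : Fin (k+2)) : ℕ)) = k - 1 := by
              unfold UEK2.skip2 at h6'
              split_ifs at h6' <;> omega
            have h8 : (σ (⟨k, hklt⟩ : Fin (k+2)) : ℕ) = u :=
              hTinj _ _ hxlt (by omega) (by rw [h7, hTu])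
            refine UEK2.witness σ (UEK2.natPA k u (UEK2.natT τ)) (fun t => t)
              (UEK2.natPA_bound k u _ (by omega) hT)
              (UEK2.natPA_invol k u _ (by omega) hT hTinv hF2)
              (fun s t ht hst => hst) ?_
            intro a
            by_cases hak : (a:ℕ) < k
            · have h5 : (σ (Fin.castSucc a) : ℕ) = UEK2.skip2 u (k+1) (UEK2.natT τ (a:ℕ)) := by
                have := hpre (Fin.castSucc a) hak
                rw [h8] at this
                exact this
              rw [h5]
              show UEK2.skip2 u (k+1) (UEK2.natT τ (a:ℕ)) = UEK2.natPA k u (UEK2.natT τ) (a:ℕ)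
              by_cases h1 : (a:ℕ) < u
              · rw [UEK2.natPA_e1 k u _ h1]
                unfold UEK2.skip2
                rw [if_pos (hF2 _ h1)]
              · by_cases h2 : (a:ℕ) = u
                · rw [h2, UEK2.natPA_e2, hTu]
                  unfold UEK2.skip2
                  rw [if_neg (by omega), if_pos (by omega)]
                  omega
                · rw [UEK2.natPA_e3 k u _ (by omega) hak, hF1 (a:ℕ) (by omega) hak]
                  unfold UEK2.skip2
                  rw [if_neg (by omega), if_pos (by omega)]
                  omega
            · have hak2 : (a:ℕ) = k := by have := a.isLt; omega
              have hcs : Fin.castSucc a = (⟨k, hklt⟩ : Fin (k+2)) := Fin.ext hak2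
              have h5 : (σ (Fin.castSucc a) : ℕ) = u := by rw [hcs]; exact h8
              rw [h5, hak2]
              show u = UEK2.natPA k u (UEK2.natT τ) k
              rw [UEK2.natPA_e4 k u _ (by omega)]
          · -- both σ(k) < k and σ(k+1) < k: leads to the "corner" involution, contradiction
            exfalso
            have hyne : (σ (⟨k+1, hk1lt⟩ : Fin (k+2)) : ℕ) ≠ k := by
              intro h
              have h2 : σ ⟨k+1, hk1lt⟩ = ⟨k, hklt⟩ := Fin.ext h
              have h3 := hσσ ⟨k+1, hk1lt⟩
              rw [h2] at h3
              have h4 : (σ (⟨k, hklt⟩ : Fin (k+2)) : ℕ) = k + 1 := by rw [h3]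
              omega
            have hylt : (σ (⟨k+1, hk1lt⟩ : Fin (k+2)) : ℕ) < k := by
              have := (σ (⟨k+1, hk1lt⟩ : Fin (k+2))).isLt
              omega
            have hne : (σ (⟨k, hklt⟩ : Fin (k+2)) : ℕ) ≠ (σ (⟨k+1, hk1lt⟩ : Fin (k+2)) : ℕ) := by
              intro h
              have h2 : σ ⟨k, hklt⟩ = σ ⟨k+1, hk1lt⟩ := Fin.ext h
              have h3 := σ.injective h2
              have h4 : k = k + 1 := congrArg Fin.val h3
              omega
            have hyKK : σ (σ ⟨k+1, hk1lt⟩) = ⟨k+1, hk1lt⟩ := hσσ _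
            -- in either order we get natT x = k-2 and natT y = k-1
            have key : UEK2.natT τ ((σ (⟨k, hklt⟩ : Fin (k+2)) : ℕ)) = k - 2 ∧
                UEK2.natT τ ((σ (⟨k+1, hk1lt⟩ : Fin (k+2)) : ℕ)) = k - 1 := by
              rcases lt_or_gt_of_ne hne with ho | ho
              · have hpre : ∀ i : Fin (k+2), (i:ℕ) < k →
                    (σ i : ℕ) = UEK2.skip2 ((σ (⟨k, hklt⟩ : Fin (k+2)) : ℕ))
                      ((σ (⟨k+1, hk1lt⟩ : Fin (k+2)) : ℕ)) (UEK2.natT τ (i:ℕ)) :=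
                  UEK2.prefix_formula hk τ σ hσσ hσ2 _ _ ho (by omega) (Or.inl ⟨rfl, rfl⟩)
                have h6 := hpre (σ ⟨k, hklt⟩) hxlt
                rw [hxK] at h6
                have h6' : k = UEK2.skip2 ((σ (⟨k, hklt⟩ : Fin (k+2)) : ℕ))
                    ((σ (⟨k+1, hk1lt⟩ : Fin (k+2)) : ℕ))
                    (UEK2.natT τ ((σ (⟨k, hklt⟩ : Fin (k+2)) : ℕ))) := h6
                have h7 := hpre (σ ⟨k+1, hk1lt⟩) hylt
                rw [hyKK] at h7
                have h7' : k + 1 = UEK2.skip2 ((σ (⟨k, hklt⟩ : Fin (k+2)) : ℕ))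
                    ((σ (⟨k+1, hk1lt⟩ : Fin (k+2)) : ℕ))
                    (UEK2.natT τ ((σ (⟨k+1, hk1lt⟩ : Fin (k+2)) : ℕ))) := h7
                have hb1 := hT _ hxlt
                have hb2 := hT _ hylt
                constructor
                · unfold UEK2.skip2 at h6'
                  split_ifs at h6' <;> omega
                · unfold UEK2.skip2 at h7'
                  split_ifs at h7' <;> omega
              · have hpre : ∀ i : Fin (k+2), (i:ℕ) < k →
                    (σ i : ℕ) = UEK2.skip2 ((σ (⟨k+1, hk1lt⟩ : Fin (k+2)) : ℕ))
                      ((σ (⟨k, hklt⟩ : Fin (k+2)) : ℕ)) (UEK2.natT τ (i:ℕ)) :=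
                  UEK2.prefix_formula hk τ σ hσσ hσ2 _ _ ho (by omega) (Or.inr ⟨rfl, rfl⟩)
                have h6 := hpre (σ ⟨k, hklt⟩) hxlt
                rw [hxK] at h6
                have h6' : k = UEK2.skip2 ((σ (⟨k+1, hk1lt⟩ : Fin (k+2)) : ℕ))
                    ((σ (⟨k, hklt⟩ : Fin (k+2)) : ℕ))
                    (UEK2.natT τ ((σ (⟨k, hklt⟩ : Fin (k+2)) : ℕ))) := h6
                have h7 := hpre (σ ⟨k+1, hk1lt⟩) hylt
                rw [hyKK] at h7
                have h7' : k + 1 = UEK2.skip2 ((σ (⟨k+1, hk1lt⟩ : Fin (k+2)) : ℕ))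
                    ((σ (⟨k, hklt⟩ : Fin (k+2)) : ℕ))
                    (UEK2.natT τ ((σ (⟨k+1, hk1lt⟩ : Fin (k+2)) : ℕ))) := h7
                have hb1 := hT _ hxlt
                have hb2 := hT _ hylt
                constructor
                · unfold UEK2.skip2 at h6'
                  split_ifs at h6' <;> omega
                · unfold UEK2.skip2 at h7'
                  split_ifs at h7' <;> omega
            have hyu : (σ (⟨k+1, hk1lt⟩ : Fin (k+2)) : ℕ) = u :=
              hTinj _ _ hylt (by omega) (by rw [key.2, hTu])
            have hTu1 : UEK2.natT τ (u+1) = k - 2 := by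
              have := hF1 (u+1) (by omega) (by omega)
              omega
            have hxu : (σ (⟨k, hklt⟩ : Fin (k+2)) : ℕ) = u + 1 :=
              hTinj _ _ hxlt (by omega) (by rw [key.1, hTu1])
            -- now the prefix must be ordered y = u < x = u+1
            apply hσ3
            have hpre : ∀ i : Fin (k+2), (i:ℕ) < k →
                (σ i : ℕ) = UEK2.skip2 u (u+1) (UEK2.natT τ (i:ℕ)) := by
              have := UEK2.prefix_formula hk τ σ hσσ hσ2 u (u+1) (by omega) (by omega)
                (Or.inr ⟨by rw [hxu], by rw [hyu]⟩)
              exact this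
            refine UEK2.witness σ (UEK2.natPA k u (UEK2.natT τ))
              (fun t => if t < u then t else t+1)
              (UEK2.natPA_bound k u _ (by omega) hT)
              (UEK2.natPA_invol k u _ (by omega) hT hTinv hF2)
              (by intro s t ht hst; (try dsimp only); split_ifs <;> omega) ?_
            intro a
            by_cases hak : (a:ℕ) < k
            · have h5 : (σ (Fin.castSucc a) : ℕ) = UEK2.skip2 u (u+1) (UEK2.natT τ (a:ℕ)) :=
                hpre (Fin.castSucc a) hak
              rw [h5]
              show UEK2.skip2 u (u+1) (UEK2.natT τ (a:ℕ)) =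
                (if UEK2.natPA k u (UEK2.natT τ) (a:ℕ) < u then UEK2.natPA k u (UEK2.natT τ) (a:ℕ)
                  else UEK2.natPA k u (UEK2.natT τ) (a:ℕ) + 1)
              by_cases h1 : (a:ℕ) < u
              · rw [UEK2.natPA_e1 k u _ h1, if_pos (hF2 _ h1)]
                unfold UEK2.skip2
                rw [if_pos (hF2 _ h1)]
              · by_cases h2 : (a:ℕ) = u
                · rw [h2, UEK2.natPA_e2, hTu, if_neg (by omega)]
                  unfold UEK2.skip2
                  rw [if_neg (by omega), if_neg (by omega)]
                  omega
                · rw [UEK2.natPA_e3 k u _ (by omega) hak, hF1 (a:ℕ) (by omega) hak,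
                    if_neg (by omega)]
                  unfold UEK2.skip2
                  rw [if_neg (by omega), if_neg (by omega)]
                  omega
            · have hak2 : (a:ℕ) = k := by have := a.isLt; omega
              have hcs : Fin.castSucc a = (⟨k, hklt⟩ : Fin (k+2)) := Fin.ext hak2
              have h5 : (σ (Fin.castSucc a) : ℕ) = u + 1 := by rw [hcs]; exact hxu
              rw [h5, hak2]
              show u + 1 = (if UEK2.natPA k u (UEK2.natT τ) k < u then
                UEK2.natPA k u (UEK2.natT τ) k else UEK2.natPA k u (UEK2.natT τ) k + 1)
              rw [UEK2.natPA_e4 k u _ (by omega), if_neg (by omega)]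
  · -- case B : u = k-1 (last layer of size 1)
    have hukm : u = k - 1 := by omega
    have htop : UEK2.natT τ (k-1) = k - 1 := by rw [hukm] at hTu; exact hTu
    obtain ⟨u', hu'1, hF3⟩ := UEK2.tau_second hk τ hτ htop
    have hu'k : u' < k - 1 := by omega
    have hsmall : ∀ j, j < k-1 → UEK2.natT τ j < k-1 := by
      intro j hj
      have h1 := hT j (by omega)
      by_cases h : UEK2.natT τ j = k-1
      · exfalso
        have h2 := hTinv j (by omega)
        rw [h, htop] at h2
        omega
      · omega
    have hF3b : ∀ j, j < u' → UEK2.natT τ j < u' := by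
      intro j hj
      by_contra hc
      push_neg at hc
      have hjk : j < k := by omega
      have hck := hT j hjk
      have hsj := hsmall j (by omega)
      have h5 := hF3 (UEK2.natT τ j) hc (by omega)
      have h6 := hTinv j hjk
      omega
    have hTu' : UEK2.natT τ u' = k - 2 := by have := hF3 u' le_rfl (by omega); omega
    have hk1lt1 : k - 1 < k + 1 := by omega
    have hu'lt1 : u' < k + 1 := by omega
    refine ⟨UEK2.mkPerm (k+2) (UEK2.natFB k u' (UEK2.natT τ))
        (UEK2.natFB_bound k u' _ hk hu'k hT)
        (UEK2.natFB_invol k u' _ hk hu'1 hT hTinv hF3 hF3b), ⟨UEK2.mkPerm_mul _ _ _ _, ?_, ?_⟩, ?_⟩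
    · -- the k-prefix has pattern τ
      apply UEK2.prefix_pattern _ τ
          (fun t => if t < u' then t else if t < k-2 then t+1 else if t = k-2 then k else k+1)
      · intro s t ht hst
        try dsimp only
        split_ifs <;> omega
      · intro a
        have ha := a.isLt
        show UEK2.natFB k u' (UEK2.natT τ) (a:ℕ) =
          (if UEK2.natT τ (a:ℕ) < u' then UEK2.natT τ (a:ℕ)
            else if UEK2.natT τ (a:ℕ) < k-2 then UEK2.natT τ (a:ℕ) + 1
            else if UEK2.natT τ (a:ℕ) = k-2 then k else k+1)
        by_cases h1 : (a:ℕ) < u'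
        · rw [UEK2.natFB_e1 k u' _ h1, if_pos (hF3b _ h1)]
        · by_cases h2 : (a:ℕ) = u'
          · rw [h2, UEK2.natFB_e2, hTu', if_neg (by omega), if_neg (by omega), if_pos rfl]
          · by_cases h3 : (a:ℕ) < k-1
            · rw [UEK2.natFB_e3 k u' _ (by omega) h3, hF3 (a:ℕ) (by omega) h3,
                if_neg (by omega), if_pos (by omega)]
              omega
            · have h4 : (a:ℕ) = k-1 := by omega
              rw [h4, UEK2.natFB_e4 k u' _ hu'k, htop,
                if_neg (by omega), if_neg (by omega), if_neg (by omega)]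
    · -- the (k+1)-prefix pattern is not an involution
      rintro ⟨p, hp, hpp⟩
      have hpp' : ∀ z, p (p z) = z := fun z => by
        have h := congrArg (fun q : Equiv.Perm (Fin (k+1)) => q z) hpp
        simpa using h
      have hAB : (⟨k-1, hk1lt1⟩ : Fin (k+1)) ≠ ⟨u', hu'lt1⟩ := by
        intro h
        have h5 : k - 1 = u' := congrArg Fin.val h
        omega
      obtain ⟨hpA, hpB⟩ := UEK2.second_max (by omega) _ ⟨k-1, hk1lt1⟩ ⟨u', hu'lt1⟩ hAB
        (fun b => by
          rw [Fin.le_def]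
          show UEK2.natFB k u' (UEK2.natT τ) (b:ℕ) ≤ UEK2.natFB k u' (UEK2.natT τ) (k-1)
          rw [UEK2.natFB_e4 k u' _ hu'k]
          have := UEK2.natFB_bound k u' (UEK2.natT τ) hk hu'k hT (b:ℕ)
            (by have := b.isLt; omega)
          omega)
        (fun b hb => by
          rw [Fin.le_def]
          show UEK2.natFB k u' (UEK2.natT τ) (b:ℕ) ≤ UEK2.natFB k u' (UEK2.natT τ) u'
          rw [UEK2.natFB_e2]
          have hbne : (b:ℕ) ≠ k-1 := fun h => hb (Fin.ext h)
          by_cases h1 : (b:ℕ) < u'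
          · rw [UEK2.natFB_e1 k u' _ h1]
            have := hF3b _ h1
            omega
          · by_cases h2 : (b:ℕ) = u'
            · rw [h2, UEK2.natFB_e2]
            · by_cases h3 : (b:ℕ) < k-1
              · rw [UEK2.natFB_e3 k u' _ (by omega) h3]
                omega
              · have hbk : (b:ℕ) = k := by have := b.isLt; omega
                rw [hbk, UEK2.natFB_e5 k u' _ hk hu'k]
                omega) p hp
      have h1 : p ⟨k-1, hk1lt1⟩ = ⟨k, hklt1⟩ := hpA.trans (Fin.ext (show k+1-1 = k by omega))
      have h2 := hpp' ⟨k-1, hk1lt1⟩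
      rw [h1] at h2
      have hpB' : p ⟨u', hu'lt1⟩ = ⟨k-1, hk1lt1⟩ :=
        hpB.trans (Fin.ext (show k+1-2 = k-1 by omega))
      have h3 := p.injective (h2.trans hpB'.symm)
      have h4 : k = u' := congrArg Fin.val h3
      omega
    · -- uniqueness
      intro σ hσ
      obtain ⟨hσ1, hσ2, hσ3⟩ := hσ
      have hσσ : ∀ z, σ (σ z) = z := fun z => by
        have h := congrArg (fun q : Equiv.Perm (Fin (k+2)) => q z) hσ1
        simpa using h
      by_cases hx1 : (σ (⟨k, hklt⟩ : Fin (k+2)) : ℕ) = k + 1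
      · exfalso; apply hσ3
        have h0 : σ ⟨k, hklt⟩ = ⟨k+1, hk1lt⟩ := Fin.ext hx1
        have hyK : σ ⟨k+1, hk1lt⟩ = ⟨k, hklt⟩ := by
          have h1 := hσσ ⟨k, hklt⟩
          rw [h0] at h1
          exact h1
        have hy1 : (σ (⟨k+1, hk1lt⟩ : Fin (k+2)) : ℕ) = k := by rw [hyK]
        have hpre : ∀ i : Fin (k+2), (i:ℕ) < k →
            (σ i : ℕ) = UEK2.skip2 k (k+1) (UEK2.natT τ (i:ℕ)) :=
          UEK2.prefix_formula hk τ σ hσσ hσ2 k (k+1) (by omega) (by omega) (Or.inr ⟨hx1, hy1⟩)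
        refine UEK2.witness σ (UEK2.natPW1 k (UEK2.natT τ)) (fun t => if t < k then t else t+1)
          (UEK2.natPW1_bound k _ hT) (UEK2.natPW1_invol k _ hT hTinv)
          (by intro s t ht hst; (try dsimp only); split_ifs <;> omega) ?_
        intro a
        by_cases hak : (a:ℕ) < k
        · have h5 : (σ (Fin.castSucc a) : ℕ) = UEK2.skip2 k (k+1) (UEK2.natT τ (a:ℕ)) :=
            hpre (Fin.castSucc a) hak
          rw [h5, UEK2.natPW1_e1 k _ hak]
          have := hT _ hak
          show UEK2.skip2 k (k+1) (UEK2.natT τ (a:ℕ)) =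
            (if UEK2.natT τ (a:ℕ) < k then UEK2.natT τ (a:ℕ) else UEK2.natT τ (a:ℕ) + 1)
          unfold UEK2.skip2
          split_ifs <;> omega
        · have hak2 : (a:ℕ) = k := by have := a.isLt; omega
          have hcs : Fin.castSucc a = (⟨k, hklt⟩ : Fin (k+2)) := Fin.ext hak2
          have h5 : (σ (Fin.castSucc a) : ℕ) = k + 1 := by rw [hcs]; exact hx1
          rw [h5, hak2, UEK2.natPW1_e2]
          show k + 1 = (if k < k then k else k+1)
          rw [if_neg (lt_irrefl k)]
      · by_cases hx2 : (σ (⟨k, hklt⟩ : Fin (k+2)) : ℕ) = k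
        · have hxK : σ ⟨k, hklt⟩ = ⟨k, hklt⟩ := Fin.ext hx2
          by_cases hy2 : (σ (⟨k+1, hk1lt⟩ : Fin (k+2)) : ℕ) = k + 1
          · exfalso; apply hσ3
            have hpre : ∀ i : Fin (k+2), (i:ℕ) < k →
                (σ i : ℕ) = UEK2.skip2 k (k+1) (UEK2.natT τ (i:ℕ)) :=
              UEK2.prefix_formula hk τ σ hσσ hσ2 k (k+1) (by omega) (by omega)
                (Or.inl ⟨hx2, hy2⟩)
            refine UEK2.witness σ (UEK2.natPW1 k (UEK2.natT τ)) (fun t => t)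
              (UEK2.natPW1_bound k _ hT) (UEK2.natPW1_invol k _ hT hTinv)
              (fun s t ht hst => hst) ?_
            intro a
            by_cases hak : (a:ℕ) < k
            · have h5 : (σ (Fin.castSucc a) : ℕ) = UEK2.skip2 k (k+1) (UEK2.natT τ (a:ℕ)) :=
                hpre (Fin.castSucc a) hak
              rw [h5, UEK2.natPW1_e1 k _ hak]
              have := hT _ hak
              show UEK2.skip2 k (k+1) (UEK2.natT τ (a:ℕ)) = UEK2.natT τ (a:ℕ)
              unfold UEK2.skip2
              split_ifs <;> omega
            · have hak2 : (a:ℕ) = k := by have := a.isLt; omega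
              have hcs : Fin.castSucc a = (⟨k, hklt⟩ : Fin (k+2)) := Fin.ext hak2
              have h5 : (σ (Fin.castSucc a) : ℕ) = k := by rw [hcs]; exact hx2
              rw [h5, hak2, UEK2.natPW1_e2]
          · -- σ(k+1) = y < k forces y = u = k-1, giving an involution pattern: contradiction
            exfalso; apply hσ3
            have hyne : (σ (⟨k+1, hk1lt⟩ : Fin (k+2)) : ℕ) ≠ k := by
              intro h
              have h2 : σ ⟨k+1, hk1lt⟩ = ⟨k, hklt⟩ := Fin.ext h
              have h3 : (⟨k+1, hk1lt⟩ : Fin (k+2)) = ⟨k, hklt⟩ :=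
                σ.injective (h2.trans hxK.symm)
              have h5 : k + 1 = k := congrArg Fin.val h3
              omega
            have hylt : (σ (⟨k+1, hk1lt⟩ : Fin (k+2)) : ℕ) < k := by
              have := (σ (⟨k+1, hk1lt⟩ : Fin (k+2))).isLt
              omega
            have hpre : ∀ i : Fin (k+2), (i:ℕ) < k →
                (σ i : ℕ) = UEK2.skip2 ((σ (⟨k+1, hk1lt⟩ : Fin (k+2)) : ℕ)) k
                  (UEK2.natT τ (i:ℕ)) :=
              UEK2.prefix_formula hk τ σ hσσ hσ2 _ k hylt (by omega) (Or.inr ⟨hx2, rfl⟩)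
            have hyK : σ (σ ⟨k+1, hk1lt⟩) = ⟨k+1, hk1lt⟩ := hσσ _
            have h6 : (σ (σ ⟨k+1, hk1lt⟩) : ℕ) =
                UEK2.skip2 ((σ (⟨k+1, hk1lt⟩ : Fin (k+2)) : ℕ)) k
                  (UEK2.natT τ ((σ (⟨k+1, hk1lt⟩ : Fin (k+2)) : ℕ))) :=
              hpre (σ ⟨k+1, hk1lt⟩) hylt
            rw [hyK] at h6
            have h6' : k + 1 = UEK2.skip2 ((σ (⟨k+1, hk1lt⟩ : Fin (k+2)) : ℕ)) k
                (UEK2.natT τ ((σ (⟨k+1, hk1lt⟩ : Fin (k+2)) : ℕ))) := h6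
            have hb := hT _ hylt
            have h7 : UEK2.natT τ ((σ (⟨k+1, hk1lt⟩ : Fin (k+2)) : ℕ)) = k - 1 := by
              unfold UEK2.skip2 at h6'
              split_ifs at h6' <;> omega
            have h8 : (σ (⟨k+1, hk1lt⟩ : Fin (k+2)) : ℕ) = u :=
              hTinj _ _ hylt (by omega) (by rw [h7, hTu])
            refine UEK2.witness σ (UEK2.natPW4 k (UEK2.natT τ))
              (fun t => if t < k-1 then t else t+1)
              (UEK2.natPW4_bound k _ hk hsmall) (UEK2.natPW4_invol k _ hk hsmall hTinv)
              (by intro s t ht hst; (try dsimp only); split_ifs <;> omega) ?_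
            intro a
            by_cases hak : (a:ℕ) < k
            · have h5 : (σ (Fin.castSucc a) : ℕ) =
                  UEK2.skip2 (k-1) k (UEK2.natT τ (a:ℕ)) := by
                have h9 := hpre (Fin.castSucc a) hak
                rw [h8, hukm] at h9
                exact h9
              rw [h5]
              show UEK2.skip2 (k-1) k (UEK2.natT τ (a:ℕ)) =
                (if UEK2.natPW4 k (UEK2.natT τ) (a:ℕ) < k-1 then UEK2.natPW4 k (UEK2.natT τ) (a:ℕ)
                  else UEK2.natPW4 k (UEK2.natT τ) (a:ℕ) + 1)
              by_cases h1 : (a:ℕ) < k-1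
              · rw [UEK2.natPW4_e1 k _ h1, if_pos (hsmall _ h1)]
                unfold UEK2.skip2
                rw [if_pos (hsmall _ h1)]
              · have h2 : (a:ℕ) = k-1 := by omega
                rw [h2, UEK2.natPW4_e2, htop, if_neg (by omega)]
                unfold UEK2.skip2
                rw [if_neg (by omega), if_neg (by omega)]
                omega
            · have hak2 : (a:ℕ) = k := by have := a.isLt; omega
              have hcs : Fin.castSucc a = (⟨k, hklt⟩ : Fin (k+2)) := Fin.ext hak2
              have h5 : (σ (Fin.castSucc a) : ℕ) = k := by rw [hcs]; exact hx2
              rw [h5, hak2]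
              show k = (if UEK2.natPW4 k (UEK2.natT τ) k < k-1 then UEK2.natPW4 k (UEK2.natT τ) k
                else UEK2.natPW4 k (UEK2.natT τ) k + 1)
              rw [UEK2.natPW4_e3 k _ hk, if_neg (by omega)]
              omega
        · -- σ(k) = x < k
          have hxlt : (σ (⟨k, hklt⟩ : Fin (k+2)) : ℕ) < k := by
            have := (σ (⟨k, hklt⟩ : Fin (k+2))).isLt
            omega
          have hxK : σ (σ ⟨k, hklt⟩) = ⟨k, hklt⟩ := hσσ _
          by_cases hy2 : (σ (⟨k+1, hk1lt⟩ : Fin (k+2)) : ℕ) = k + 1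
          · -- pattern is the layered extension: contradiction
            exfalso; apply hσ3
            have hpre : ∀ i : Fin (k+2), (i:ℕ) < k →
                (σ i : ℕ) = UEK2.skip2 ((σ (⟨k, hklt⟩ : Fin (k+2)) : ℕ)) (k+1)
                  (UEK2.natT τ (i:ℕ)) :=
              UEK2.prefix_formula hk τ σ hσσ hσ2 _ (k+1) (by omega) (by omega)
                (Or.inl ⟨rfl, hy2⟩)
            have h6 : (σ (σ ⟨k, hklt⟩) : ℕ) =
                UEK2.skip2 ((σ (⟨k, hklt⟩ : Fin (k+2)) : ℕ)) (k+1)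
                  (UEK2.natT τ ((σ (⟨k, hklt⟩ : Fin (k+2)) : ℕ))) :=
              hpre (σ ⟨k, hklt⟩) hxlt
            rw [hxK] at h6
            have h6' : k = UEK2.skip2 ((σ (⟨k, hklt⟩ : Fin (k+2)) : ℕ)) (k+1)
                (UEK2.natT τ ((σ (⟨k, hklt⟩ : Fin (k+2)) : ℕ))) := h6
            have hb := hT _ hxlt
            have h7 : UEK2.natT τ ((σ (⟨k, hklt⟩ : Fin (k+2)) : ℕ)) = k - 1 := by
              unfold UEK2.skip2 at h6'
              split_ifs at h6' <;> omega
            have h8 : (σ (⟨k, hklt⟩ : Fin (k+2)) : ℕ) = u :=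
              hTinj _ _ hxlt (by omega) (by rw [h7, hTu])
            refine UEK2.witness σ (UEK2.natPA k u (UEK2.natT τ)) (fun t => t)
              (UEK2.natPA_bound k u _ (by omega) hT)
              (UEK2.natPA_invol k u _ (by omega) hT hTinv hF2)
              (fun s t ht hst => hst) ?_
            intro a
            by_cases hak : (a:ℕ) < k
            · have h5 : (σ (Fin.castSucc a) : ℕ) = UEK2.skip2 u (k+1) (UEK2.natT τ (a:ℕ)) := by
                have := hpre (Fin.castSucc a) hak
                rw [h8] at this
                exact this
              rw [h5]
              show UEK2.skip2 u (k+1) (UEK2.natT τ (a:ℕ)) = UEK2.natPA k u (UEK2.natT τ) (a:ℕ)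
              by_cases h1 : (a:ℕ) < u
              · rw [UEK2.natPA_e1 k u _ h1]
                unfold UEK2.skip2
                rw [if_pos (hF2 _ h1)]
              · by_cases h2 : (a:ℕ) = u
                · rw [h2, UEK2.natPA_e2, hTu]
                  unfold UEK2.skip2
                  rw [if_neg (by omega), if_pos (by omega)]
                  omega
                · rw [UEK2.natPA_e3 k u _ (by omega) hak, hF1 (a:ℕ) (by omega) hak]
                  unfold UEK2.skip2
                  rw [if_neg (by omega), if_pos (by omega)]
                  omega
            · have hak2 : (a:ℕ) = k := by have := a.isLt; omega
              have hcs : Fin.castSucc a = (⟨k, hklt⟩ : Fin (k+2)) := Fin.ext hak2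
              have h5 : (σ (Fin.castSucc a) : ℕ) = u := by rw [hcs]; exact h8
              rw [h5, hak2]
              show u = UEK2.natPA k u (UEK2.natT τ) k
              rw [UEK2.natPA_e4 k u _ (by omega)]
          · -- both below k: σ is our σ₀ (case B)
            have hyne : (σ (⟨k+1, hk1lt⟩ : Fin (k+2)) : ℕ) ≠ k := by
              intro h
              have h2 : σ ⟨k+1, hk1lt⟩ = ⟨k, hklt⟩ := Fin.ext h
              have h3 := hσσ ⟨k+1, hk1lt⟩
              rw [h2] at h3
              have h4 : (σ (⟨k, hklt⟩ : Fin (k+2)) : ℕ) = k + 1 := by rw [h3]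
              omega
            have hylt : (σ (⟨k+1, hk1lt⟩ : Fin (k+2)) : ℕ) < k := by
              have := (σ (⟨k+1, hk1lt⟩ : Fin (k+2))).isLt
              omega
            have hne : (σ (⟨k, hklt⟩ : Fin (k+2)) : ℕ) ≠ (σ (⟨k+1, hk1lt⟩ : Fin (k+2)) : ℕ) := by
              intro h
              have h2 : σ ⟨k, hklt⟩ = σ ⟨k+1, hk1lt⟩ := Fin.ext h
              have h3 := σ.injective h2
              have h4 : k = k + 1 := congrArg Fin.val h3
              omega
            have hyKK : σ (σ ⟨k+1, hk1lt⟩) = ⟨k+1, hk1lt⟩ := hσσ _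
            have key : UEK2.natT τ ((σ (⟨k, hklt⟩ : Fin (k+2)) : ℕ)) = k - 2 ∧
                UEK2.natT τ ((σ (⟨k+1, hk1lt⟩ : Fin (k+2)) : ℕ)) = k - 1 := by
              rcases lt_or_gt_of_ne hne with ho | ho
              · have hpre : ∀ i : Fin (k+2), (i:ℕ) < k →
                    (σ i : ℕ) = UEK2.skip2 ((σ (⟨k, hklt⟩ : Fin (k+2)) : ℕ))
                      ((σ (⟨k+1, hk1lt⟩ : Fin (k+2)) : ℕ)) (UEK2.natT τ (i:ℕ)) :=
                  UEK2.prefix_formula hk τ σ hσσ hσ2 _ _ ho (by omega) (Or.inl ⟨rfl, rfl⟩)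
                have h6 := hpre (σ ⟨k, hklt⟩) hxlt
                rw [hxK] at h6
                have h6' : k = UEK2.skip2 ((σ (⟨k, hklt⟩ : Fin (k+2)) : ℕ))
                    ((σ (⟨k+1, hk1lt⟩ : Fin (k+2)) : ℕ))
                    (UEK2.natT τ ((σ (⟨k, hklt⟩ : Fin (k+2)) : ℕ))) := h6
                have h7 := hpre (σ ⟨k+1, hk1lt⟩) hylt
                rw [hyKK] at h7
                have h7' : k + 1 = UEK2.skip2 ((σ (⟨k, hklt⟩ : Fin (k+2)) : ℕ))
                    ((σ (⟨k+1, hk1lt⟩ : Fin (k+2)) : ℕ))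
                    (UEK2.natT τ ((σ (⟨k+1, hk1lt⟩ : Fin (k+2)) : ℕ))) := h7
                have hb1 := hT _ hxlt
                have hb2 := hT _ hylt
                constructor
                · unfold UEK2.skip2 at h6'
                  split_ifs at h6' <;> omega
                · unfold UEK2.skip2 at h7'
                  split_ifs at h7' <;> omega
              · have hpre : ∀ i : Fin (k+2), (i:ℕ) < k →
                    (σ i : ℕ) = UEK2.skip2 ((σ (⟨k+1, hk1lt⟩ : Fin (k+2)) : ℕ))
                      ((σ (⟨k, hklt⟩ : Fin (k+2)) : ℕ)) (UEK2.natT τ (i:ℕ)) :=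
                  UEK2.prefix_formula hk τ σ hσσ hσ2 _ _ ho (by omega) (Or.inr ⟨rfl, rfl⟩)
                have h6 := hpre (σ ⟨k, hklt⟩) hxlt
                rw [hxK] at h6
                have h6' : k = UEK2.skip2 ((σ (⟨k+1, hk1lt⟩ : Fin (k+2)) : ℕ))
                    ((σ (⟨k, hklt⟩ : Fin (k+2)) : ℕ))
                    (UEK2.natT τ ((σ (⟨k, hklt⟩ : Fin (k+2)) : ℕ))) := h6
                have h7 := hpre (σ ⟨k+1, hk1lt⟩) hylt
                rw [hyKK] at h7
                have h7' : k + 1 = UEK2.skip2 ((σ (⟨k+1, hk1lt⟩ : Fin (k+2)) : ℕ))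
                    ((σ (⟨k, hklt⟩ : Fin (k+2)) : ℕ))
                    (UEK2.natT τ ((σ (⟨k+1, hk1lt⟩ : Fin (k+2)) : ℕ))) := h7
                have hb1 := hT _ hxlt
                have hb2 := hT _ hylt
                constructor
                · unfold UEK2.skip2 at h6'
                  split_ifs at h6' <;> omega
                · unfold UEK2.skip2 at h7'
                  split_ifs at h7' <;> omega
            have hyu : (σ (⟨k+1, hk1lt⟩ : Fin (k+2)) : ℕ) = u :=
              hTinj _ _ hylt (by omega) (by rw [key.2, hTu])
            have hxu' : (σ (⟨k, hklt⟩ : Fin (k+2)) : ℕ) = u' :=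
              hTinj _ _ hxlt (by omega) (by rw [key.1, hTu'])
            have hpre : ∀ i : Fin (k+2), (i:ℕ) < k →
                (σ i : ℕ) = UEK2.skip2 u' (k-1) (UEK2.natT τ (i:ℕ)) :=
              UEK2.prefix_formula hk τ σ hσσ hσ2 u' (k-1) (by omega) (by omega)
                (Or.inl ⟨hxu', by rw [hyu]; exact hukm⟩)
            apply Equiv.ext
            intro z
            apply Fin.ext
            show (σ z : ℕ) = UEK2.natFB k u' (UEK2.natT τ) (z : ℕ)
            by_cases hzk : (z:ℕ) < k
            · have h9 : (σ z : ℕ) = UEK2.skip2 u' (k-1) (UEK2.natT τ (z:ℕ)) := hpre z hzk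
              rw [h9]
              by_cases hz1 : (z:ℕ) < u'
              · rw [UEK2.natFB_e1 k u' _ hz1]
                unfold UEK2.skip2
                rw [if_pos (hF3b _ hz1)]
              · by_cases hz2 : (z:ℕ) = u'
                · rw [hz2, UEK2.natFB_e2, hTu']
                  unfold UEK2.skip2
                  rw [if_neg (by omega), if_neg (by omega)]
                  omega
                · by_cases hz3 : (z:ℕ) < k-1
                  · rw [UEK2.natFB_e3 k u' _ (by omega) hz3, hF3 (z:ℕ) (by omega) hz3]
                    unfold UEK2.skip2
                    rw [if_neg (by omega), if_pos (by omega)]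
                    omega
                  · have hz4 : (z:ℕ) = k-1 := by omega
                    rw [hz4, UEK2.natFB_e4 k u' _ hu'k, htop]
                    unfold UEK2.skip2
                    rw [if_neg (by omega), if_neg (by omega)]
                    omega
            · by_cases hzk2 : (z:ℕ) = k
              · have hz : z = ⟨k, hklt⟩ := Fin.ext hzk2
                rw [hz]
                show (σ (⟨k, hklt⟩ : Fin (k+2)) : ℕ) = UEK2.natFB k u' (UEK2.natT τ) k
                rw [UEK2.natFB_e5 k u' _ hk hu'k]
                exact hxu'
              · have hzk3 : (z:ℕ) = k+1 := by have := z.isLt; omega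
                have hz : z = ⟨k+1, hk1lt⟩ := Fin.ext hzk3
                rw [hz]
                show (σ (⟨k+1, hk1lt⟩ : Fin (k+2)) : ℕ) = UEK2.natFB k u' (UEK2.natT τ) (k+1)
                rw [UEK2.natFB_e6 k u' _ hk hu'k]
                rw [hyu]
                exact hukm
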